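/- Let G be a connected graph on n vertices with exactly k pendant vertices, where 2 ≤ k ≤ n−3. Then ε(G) ≤ ⌊(3n² − k² − 2nk + 2(n+k))/4⌋, and for every 1 ≤ l ≤ k−1 the tree T(l, k−l, n−k) attains this bound, i.e., ε(T(l, k−l, n−k)) = ⌊(3n² − k² − 2nk + 2(n+k))/4⌋. -/
import Mathlib


open SimpleGraph

/-- The eccentricity of a vertex: maximum distance to any vertex. -/
noncomputable def ecc {V : Type*} (G : SimpleGraph V) (v : V) : ℕ :=
  ⨆ u, G.dist v u

/-- The total eccentricity index: sum of eccentricities of all vertices. -/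
noncomputable def totalEcc {V : Type*} [Fintype V] (G : SimpleGraph V) : ℕ :=
  ∑ v, ecc G v

/-- A pendant vertex: a vertex of degree one, i.e. with exactly one neighbour. -/
def IsPendant {V : Type*} (G : SimpleGraph V) (v : V) : Prop :=
  ∃! u, G.Adj v u

/-- A cut vertex: a vertex whose removal disconnects the graph. -/
def IsCutVertex {V : Type*} (G : SimpleGraph V) (w : V) : Prop :=
  ¬ (G.induce {v | v ≠ w}).Connected

/-- distance between two subgraphs -/
noncomputable def subgraphDist {V : Type*} (G : SimpleGraph V) (B B' : G.Subgraph) : ℕ :=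
  sInf {d | ∃ u ∈ B.verts, ∃ w ∈ B'.verts, G.dist u w = d}

/-- A 2-connected subgraph: at least two vertices, connected, and no cut vertex. -/
def TwoConn {V : Type*} {G : SimpleGraph V} (H : G.Subgraph) : Prop :=
  2 ≤ H.verts.ncard ∧ H.coe.Connected ∧ ∀ w, ¬ IsCutVertex H.coe w

/-- A block: a maximal 2-connected subgraph. -/
def IsBlock {V : Type*} {G : SimpleGraph V} (H : G.Subgraph) : Prop :=
  TwoConn H ∧ ∀ H' : G.Subgraph, H ≤ H' → TwoConn H' → H' = H

/-- A pendant block: a block containing exactly one cut vertex of `G`. -/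
def IsPendantBlock {V : Type*} (G : SimpleGraph V) (H : G.Subgraph) : Prop :=
  ∃! w, w ∈ H.verts ∧ IsCutVertex G w

/-- `G_{k,l}`: the graph obtained from `G` by attaching two new paths,
with `k` resp. `l` new vertices, at the vertex `v`. -/
def attachTwoPaths {V : Type*} (G : SimpleGraph V) (v : V) (k l : ℕ) :
    SimpleGraph (V ⊕ (Fin k ⊕ Fin l)) :=
  SimpleGraph.fromRel (fun p q =>
    match p, q with
    | .inl x, .inl y => G.Adj x y
    | .inl x, .inr (.inl i) => x = v ∧ i.val = 0
    | .inl x, .inr (.inr i) => x = v ∧ i.val = 0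
    | .inr (.inl i), .inr (.inl j) => i.val + 1 = j.val
    | .inr (.inr i), .inr (.inr j) => i.val + 1 = j.val
    | _, _ => False)

/-- The graph obtained from `H1`, `H2` and the path `P_d = v_1 v_2 … v_d` by identifying
`u ∈ V(H1)`, `v ∈ V(H2)` and `v_1` into a single vertex.  The `Fin (d-1)` part records the
path vertices `v_2, …, v_d`. -/
def glueMid {V1 V2 : Type*} (H1 : SimpleGraph V1) (H2 : SimpleGraph V2)
    (u : V1) (v : V2) (d : ℕ) :
    SimpleGraph (V1 ⊕ ({x : V2 // x ≠ v} ⊕ Fin (d - 1))) :=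
  SimpleGraph.fromRel (fun p q =>
    match p, q with
    | .inl x, .inl y => H1.Adj x y
    | .inl x, .inr (.inl y) => x = u ∧ H2.Adj v y.1
    | .inl x, .inr (.inr i) => x = u ∧ i.val = 0
    | .inr (.inl x), .inr (.inl y) => H2.Adj x.1 y.1
    | .inr (.inr i), .inr (.inr j) => i.val + 1 = j.val
    | _, _ => False)

/-- The graph obtained from `H1`, `H2` and the path `P_d = v_1 v_2 … v_d` by identifying
`u ∈ V(H1)` with `v_1` and `v ∈ V(H2)` with `v_d`.  The `Fin (d-1)` part records the path
vertices `v_2, …, v_d` (the last one being identified with `v`). -/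
def glueEnds {V1 V2 : Type*} (H1 : SimpleGraph V1) (H2 : SimpleGraph V2)
    (u : V1) (v : V2) (d : ℕ) :
    SimpleGraph (V1 ⊕ ({x : V2 // x ≠ v} ⊕ Fin (d - 1))) :=
  SimpleGraph.fromRel (fun p q =>
    match p, q with
    | .inl x, .inl y => H1.Adj x y
    | .inl x, .inr (.inr i) => x = u ∧ i.val = 0
    | .inr (.inl x), .inr (.inl y) => H2.Adj x.1 y.1
    | .inr (.inr i), .inr (.inl y) => i.val + 1 = d - 1 ∧ H2.Adj v y.1
    | .inr (.inr i), .inr (.inr j) => i.val + 1 = j.val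
    | _, _ => False)

/-- `U_{n,g}^l`: the unicyclic graph on `n` vertices obtained by joining one end vertex of
the path `P_{n-g}` to a vertex of the cycle `C_g` by an edge. -/
def UnlGraph (n g : ℕ) : SimpleGraph (Fin (n - g) ⊕ Fin g) :=
  SimpleGraph.fromRel (fun p q =>
    match p, q with
    | .inl i, .inl j => i.val + 1 = j.val
    | .inl i, .inr j => i.val + 1 = n - g ∧ j.val = 0
    | .inr i, .inr j => i.val + 1 = j.val ∨ (i.val = 0 ∧ j.val + 1 = g)
    | _, _ => False)

/-- `U_{n,g}^p`: the unicyclic graph on `n` vertices obtained by attaching `n - g` pendant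
vertices to one vertex of the cycle `C_g`. -/
def UnpGraph (n g : ℕ) : SimpleGraph (Fin g ⊕ Fin (n - g)) :=
  SimpleGraph.fromRel (fun p q =>
    match p, q with
    | .inl i, .inl j => i.val + 1 = j.val ∨ (i.val = 0 ∧ j.val + 1 = g)
    | .inl i, .inr _ => i.val = 0
    | _, _ => False)

/-- The graph obtained by joining the vertex `u` of `H` to the pendant vertex of
`U_{r,g}^l` by an edge. -/
def joinPendant {V : Type*} (H : SimpleGraph V) (u : V) (r g : ℕ) :
    SimpleGraph (V ⊕ (Fin (r - g) ⊕ Fin g)) :=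
  SimpleGraph.fromRel (fun p q =>
    match p, q with
    | .inl x, .inl y => H.Adj x y
    | .inl x, .inr (.inl i) => x = u ∧ i.val = 0
    | .inr a, .inr b => (UnlGraph r g).Adj a b
    | _, _ => False)

/-- `C_{m1,m2}^n` in the case `n = m1 + m2 - 1`: two cycles `C_{m1}` and `C_{m2}`
sharing exactly one vertex (the vertex `0`). -/
def twoCyclesGlued (m1 m2 : ℕ) : SimpleGraph (Fin (m1 + m2 - 1)) :=
  SimpleGraph.fromRel (fun i j =>
    (i.val + 1 = j.val ∧ j.val < m1) ∨ (i.val = 0 ∧ j.val + 1 = m1)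
    ∨ (i.val = 0 ∧ j.val = m1) ∨ (m1 ≤ i.val ∧ i.val + 1 = j.val)
    ∨ (i.val = 0 ∧ j.val + 2 = m1 + m2))

/-- `C_{3,3}^n` for `n > 5`: two triangles `{0,1,2}` and `{n-3,n-2,n-1}` joined by the path
`2, 3, …, n-3` (a path on `n - 4` vertices whose ends are identified with a vertex of each
triangle). -/
def C33 (n : ℕ) : SimpleGraph (Fin n) :=
  SimpleGraph.fromRel (fun i j =>
    (i.val = 0 ∧ j.val = 1) ∨ (i.val = 0 ∧ j.val = 2) ∨ (i.val = 1 ∧ j.val = 2)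
    ∨ (2 ≤ i.val ∧ i.val + 1 = j.val ∧ j.val + 3 ≤ n)
    ∨ (i.val + 3 = n ∧ j.val + 2 = n) ∨ (i.val + 2 = n ∧ j.val + 1 = n)
    ∨ (i.val + 3 = n ∧ j.val + 1 = n))

/-- `T(l, m, d)`: the tree obtained from the path `P_d` by attaching `l` pendant vertices at
one end and `m` pendant vertices at the other end. -/
def Tlmd (l m d : ℕ) : SimpleGraph (Fin d ⊕ (Fin l ⊕ Fin m)) :=
  SimpleGraph.fromRel (fun p q =>
    match p, q with
    | .inl i, .inl j => i.val + 1 = j.val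
    | .inl i, .inr (.inl _) => i.val = 0
    | .inl i, .inr (.inr _) => i.val + 1 = d
    | _, _ => False)

/-- `K_m^n(l_1, …, l_m)`: the graph obtained from the complete graph `K_m` by identifying,
for each `i`, one end vertex of a path on `l i` vertices with the `i`-th vertex of `K_m`.
The vertex `⟨i, 0⟩` is the `i`-th vertex of the complete graph. -/
def Kmn (m : ℕ) (l : Fin m → ℕ) : SimpleGraph ((i : Fin m) × Fin (l i)) :=
  SimpleGraph.fromRel (fun p q =>
    (p.1 = q.1 ∧ p.2.val + 1 = q.2.val) ∨ (p.1 ≠ q.1 ∧ p.2.val = 0 ∧ q.2.val = 0))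

/-- The graph obtained from `H`, `C_{m1}` and `C_{m2}` by identifying the vertex `w` of `H`,
a vertex of `C_{m1}` and a vertex of `C_{m2}` into one vertex. -/
def glueTwoCycles {V : Type*} (H : SimpleGraph V) (w : V) (m1 m2 : ℕ) :
    SimpleGraph (V ⊕ (Fin (m1 - 1) ⊕ Fin (m2 - 1))) :=
  SimpleGraph.fromRel (fun p q =>
    match p, q with
    | .inl x, .inl y => H.Adj x y
    | .inl x, .inr (.inl i) => x = w ∧ (i.val = 0 ∨ i.val + 2 = m1)
    | .inl x, .inr (.inr i) => x = w ∧ (i.val = 0 ∨ i.val + 2 = m2)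
    | .inr (.inl i), .inr (.inl j) => i.val + 1 = j.val
    | .inr (.inr i), .inr (.inr j) => i.val + 1 = j.val
    | _, _ => False)

/-- The graph obtained from `H` and the cycle `C_M` by identifying the vertex `w` of `H`
with one vertex of the cycle. -/
def glueOneCycle {V : Type*} (H : SimpleGraph V) (w : V) (M : ℕ) :
    SimpleGraph (V ⊕ Fin (M - 1)) :=
  SimpleGraph.fromRel (fun p q =>
    match p, q with
    | .inl x, .inl y => H.Adj x y
    | .inl x, .inr i => x = w ∧ (i.val = 0 ∨ i.val + 2 = M)
    | .inr i, .inr j => i.val + 1 = j.val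
    | _, _ => False)

/-! ### Auxiliary machinery for statement 8 -/

section Stmt8Aux

variable {V : Type*}

lemma aux_connected_delete_edge (H : SimpleGraph V) (hH : H.Connected) (a b : V)
    (hr : (H \ fromEdgeSet {s(a, b)}).Reachable a b) :
    (H \ fromEdgeSet {s(a, b)}).Connected := by
  rw [connected_iff]
  refine ⟨fun x y => ?_, hH.nonempty⟩
  obtain ⟨p⟩ := hH.preconnected x y
  induction p with
  | nil => exact Reachable.refl _
  | @cons u c w h q ih =>
    refine Reachable.trans ?_ ih
    by_cases he : s(u, c) = s(a, b)
    · rw [Sym2.eq_iff] at he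
      rcases he with ⟨rfl, rfl⟩ | ⟨rfl, rfl⟩
      · exact hr
      · exact hr.symm
    · exact Adj.reachable ⟨h, by simp [fromEdgeSet_adj, he]⟩

/-- every finite connected graph has a spanning tree -/
lemma aux_exists_spanning_tree [Fintype V] (G : SimpleGraph V) (hG : G.Connected) :
    ∃ T : SimpleGraph V, T ≤ G ∧ T.IsTree := by
  classical
  have hne : ((fun H => H.edgeSet.ncard) '' {H : SimpleGraph V | H ≤ G ∧ H.Connected}).Nonempty :=
    ⟨_, G, ⟨le_rfl, hG⟩, rfl⟩
  obtain ⟨T, hTS, hTm⟩ := Nat.sInf_mem hne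
  refine ⟨T, hTS.1, hTS.2, ?_⟩
  intro v c hc
  obtain ⟨u, he⟩ : ∃ u, s(v, u) ∈ c.edges := by
    cases c with
    | nil => exact absurd hc (by simp [Walk.IsCycle])
    | @cons _ x _ h q => exact ⟨x, by simp⟩
  have hadj : T.Adj v u := c.adj_of_mem_edges he
  have hreach : (T \ fromEdgeSet {s(v, u)}).Reachable v u :=
    (adj_and_reachable_delete_edges_iff_exists_cycle.mpr ⟨_, c, hc, he⟩).2
  set T' := T \ fromEdgeSet {s(v, u)} with hT'
  have hconn' : T'.Connected := aux_connected_delete_edge T hTS.2 v u hreach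
  have hle : T' ≤ G := le_trans sdiff_le hTS.1
  have hlt : T'.edgeSet.ncard < T.edgeSet.ncard := by
    apply Set.ncard_lt_ncard
    · constructor
      · rw [hT']
        simp only [edgeSet_sdiff]
        exact Set.diff_subset
      · intro hsub
        have h2 : s(v, u) ∈ T'.edgeSet := hsub hadj
        rw [hT'] at h2
        simp only [edgeSet_sdiff, edgeSet_fromEdgeSet, Set.mem_diff, Set.mem_diff,
          Set.mem_singleton_iff] at h2
        simp [hadj.ne] at h2
    · exact T.edgeSet.toFinite
  have hge := Nat.sInf_le (show T'.edgeSet.ncard ∈ (fun H => H.edgeSet.ncard) '' {H : SimpleGraph V | H ≤ G ∧ H.Connected} from ⟨T', ⟨hle, hconn'⟩, rfl⟩)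
  have hTm2 : T.edgeSet.ncard = sInf ((fun H => H.edgeSet.ncard) '' {H : SimpleGraph V | H ≤ G ∧ H.Connected}) := hTm
  omega

variable {T : SimpleGraph V}


lemma tree_path_length (hT : T.IsTree) {u v : V} (p : T.Walk u v) (hp : p.IsPath) :
    p.length = T.dist u v := by
  obtain ⟨q, hq, hql⟩ := hT.isConnected.exists_path_of_dist u v
  have : (⟨p, hp⟩ : T.Path u v) = ⟨q, hq⟩ := hT.IsAcyclic.path_unique _ _
  rw [show p = q from congrArg Subtype.val this, hql]

lemma tree_split (hT : T.IsTree) {u v w : V} (p : T.Walk u v) (hp : p.IsPath)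
    (hw : w ∈ p.support) : T.dist u w + T.dist w v = T.dist u v := by
  classical
  have h1 := tree_path_length hT _ (hp.takeUntil hw)
  have h2 := tree_path_length hT _ (hp.dropUntil hw)
  have h3 := tree_path_length hT p hp
  have h4 : (p.takeUntil w hw).length + (p.dropUntil w hw).length = p.length := by
    rw [← Walk.length_append, Walk.take_spec]
  omega

lemma tree_seg (hT : T.IsTree) {x y w p : V} (P : T.Walk x y) (hP : P.IsPath)
    (hw : w ∈ P.support) (hp : p ∈ P.support) :
    ∃ q : T.Walk w p, q.IsPath ∧ ∀ z ∈ q.support, z ∈ P.support := by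
  classical
  have hsplit : p ∈ (P.takeUntil w hw).support ∨ p ∈ (P.dropUntil w hw).support := by
    rw [← Walk.mem_support_append_iff, Walk.take_spec]
    exact hp
  rcases hsplit with h | h
  · have htk : (P.takeUntil w hw).IsPath := hP.takeUntil hw
    refine ⟨((P.takeUntil w hw).dropUntil p h).reverse, (htk.dropUntil h).reverse, ?_⟩
    intro z hz
    rw [Walk.support_reverse, List.mem_reverse] at hz
    exact Walk.support_takeUntil_subset _ hw (Walk.support_dropUntil_subset _ h hz)
  · have hdp : (P.dropUntil w hw).IsPath := hP.dropUntil hw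
    refine ⟨(P.dropUntil w hw).takeUntil p h, hdp.takeUntil h, ?_⟩
    intro z hz
    exact Walk.support_dropUntil_subset _ hw (Walk.support_takeUntil_subset _ h hz)

lemma tree_dist2 (hT : T.IsTree) {x y w p : V} (P : T.Walk x y) (hP : P.IsPath)
    (hw : w ∈ P.support) (hp : p ∈ P.support) :
    T.dist x w + T.dist w p = T.dist x p ∨ T.dist x p + T.dist p w = T.dist x w := by
  classical
  have hsplit : p ∈ (P.takeUntil w hw).support ∨ p ∈ (P.dropUntil w hw).support := by
    rw [← Walk.mem_support_append_iff, Walk.take_spec]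
    exact hp
  rcases hsplit with h | h
  · exact Or.inr (tree_split hT _ (hP.takeUntil hw) h)
  · left
    have h1 := tree_split hT _ (hP.dropUntil hw) h
    have h2 := tree_split hT P hP hw
    have h3 := tree_split hT P hP hp
    omega

lemma tree_proj_aux (hT : T.IsTree) {x y : V} (P : T.Walk x y) (hP : P.IsPath) :
    ∀ {u x' : V} (r : T.Walk u x'), r.IsPath → x' ∈ P.support →
      ∃ w, w ∈ P.support ∧ w ∈ r.support ∧
        ∀ p ∈ P.support, T.dist u p = T.dist u w + T.dist w p := by
  classical
  intro u x' r
  induction r with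
  | nil =>
    intro _ hx'
    exact ⟨_, hx', Walk.start_mem_support _, fun p _ => by simp [SimpleGraph.dist_self]⟩
  | @cons u z _ h r' ih =>
    intro hr hx'
    rw [Walk.cons_isPath_iff] at hr
    obtain ⟨hr', hu⟩ := hr
    by_cases hup : u ∈ P.support
    · exact ⟨u, hup, Walk.start_mem_support _, fun p _ => by simp [SimpleGraph.dist_self]⟩
    · obtain ⟨w, hwP, hwr', hIH⟩ := ih hr' hx'
      set s := r'.takeUntil w hwr' with hs
      have hsP : s.IsPath := hr'.takeUntil hwr'
      have hsS : ∀ z' ∈ s.support, z' ∈ r'.support := fun z' hz' =>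
        Walk.support_takeUntil_subset _ hwr' hz'
      have hslen : s.length = T.dist z w := tree_path_length hT s hsP
      have hducw : T.dist u w = 1 + T.dist z w := by
        have hpB : (Walk.cons h s).IsPath := by
          rw [Walk.cons_isPath_iff]
          exact ⟨hsP, fun hmem => hu (hsS _ hmem)⟩
        have := tree_path_length hT _ hpB
        simp only [Walk.length_cons] at this
        omega
      refine ⟨w, hwP, List.mem_cons_of_mem _ hwr', fun p hp => ?_⟩
      obtain ⟨q, hq, hqS⟩ := tree_seg hT P hP hwP hp
      have hqlen : q.length = T.dist w p := tree_path_length hT q hq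
      have hAlen : (s.append q).length = T.dist z p := by
        rw [Walk.length_append, hslen, hqlen, hIH p hp]
      have hA : (s.append q).IsPath := (s.append q).isPath_of_length_eq_dist hAlen
      have hpB : (Walk.cons h (s.append q)).IsPath := by
        rw [Walk.cons_isPath_iff]
        refine ⟨hA, fun hmem => ?_⟩
        rcases (Walk.mem_support_append_iff _ _).mp hmem with hm | hm
        · exact hu (hsS _ hm)
        · exact hup (hqS _ hm)
      have hlB := tree_path_length hT _ hpB
      simp only [Walk.length_cons] at hlB
      rw [hAlen] at hlB
      have := hIH p hp
      omega

lemma tree_proj (hT : T.IsTree) {x y : V} (P : T.Walk x y) (hP : P.IsPath) (u : V) :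
    ∃ w ∈ P.support, ∀ p ∈ P.support, T.dist u p = T.dist u w + T.dist w p := by
  obtain ⟨r, hr, -⟩ := hT.isConnected.exists_path_of_dist u x
  obtain ⟨w, hwP, -, hIH⟩ := tree_proj_aux hT P hP r hr P.start_mem_support
  exact ⟨w, hwP, hIH⟩

variable {G : SimpleGraph V}

lemma ecc_le [Fintype V] {v : V} {m : ℕ} (h : ∀ u, G.dist v u ≤ m) : ecc G v ≤ m := by
  have : Nonempty V := ⟨v⟩
  exact ciSup_le h

lemma dist_le_ecc [Fintype V] (v u : V) : G.dist v u ≤ ecc G v :=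
  le_ciSup (Set.Finite.bddAbove (Set.finite_range _)) u

lemma ecc_mono [Fintype V] {G' : SimpleGraph V} (hle : G ≤ G') (hconn : G.Connected) (v : V) :
    ecc G' v ≤ ecc G v := by
  refine ecc_le fun u => le_trans (Reachable.dist_anti hle (hconn v u)) (dist_le_ecc v u)

lemma fsum_eq : ∀ d : ℕ, 4 * (∑ i ∈ Finset.range (d + 1), max i (d - i)) = 3 * d ^ 2 + 4 * d + d % 2 := by
  intro d
  induction d using Nat.twoStepInduction with
  | zero => simp
  | one => decide
  | more d ih _ =>
    have hstep : (∑ i ∈ Finset.range (d + 2 + 1), max i (d + 2 - i))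
        = (∑ i ∈ Finset.range (d + 1), max i (d - i)) + (3 * d + 5) := by
      rw [Finset.sum_range_succ'] -- peel i = 0
      rw [Finset.sum_range_succ] -- peel i = d + 1
      have hcongr : ∀ i ∈ Finset.range (d + 1), max (i + 1) (d + 2 - (i + 1)) = max i (d - i) + 1 := by
        intro i hi
        rw [Finset.mem_range] at hi
        have h1 : d + 2 - (i + 1) = (d - i) + 1 := by omega
        rw [h1, Nat.succ_max_succ]
      rw [Finset.sum_congr rfl hcongr, Finset.sum_add_distrib, Finset.sum_const, Finset.card_range]
      have h2 : max (d + 1 + 1) (d + 2 - (d + 1 + 1)) = d + 2 := by omega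
      have h3 : max 0 (d + 2 - 0) = d + 2 := by omega
      rw [h2, h3]
      ring
    rw [hstep]
    have : (d + 2) % 2 = d % 2 := by omega
    rw [this] at *
    nlinarith [ih]

lemma pendant_dist {T : SimpleGraph V} {v u0 z : V} (huniq : ∀ w, T.Adj v w → w = u0)
    (hz : z ≠ v) (hreach : T.Reachable z v) : T.dist z u0 + 1 ≤ T.dist z v := by
  obtain ⟨p, hlen⟩ := hreach.exists_walk_length_eq_dist
  obtain ⟨w, hadj, q, hq⟩ := Walk.exists_eq_cons_of_ne (Ne.symm hz) p.reverse
  have hw : w = u0 := huniq w hadj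
  have h1 : T.dist z w ≤ q.reverse.length := SimpleGraph.dist_le q.reverse
  have h1' : T.dist z u0 = T.dist z w := by rw [hw]
  have h2 : p.reverse.length = q.length + 1 := by rw [hq]; simp
  rw [Walk.length_reverse] at h2
  rw [Walk.length_reverse] at h1
  omega

lemma tree_totalEcc_bound [Fintype V] {T : SimpleGraph V} (hT : T.IsTree) (K : Finset V)
    (hKpend : ∀ v ∈ K, ∃! u, T.Adj v u) (hK2 : 2 ≤ K.card) :
    4 * totalEcc T + K.card ^ 2 + 2 * Fintype.card V * K.card ≤
      3 * Fintype.card V ^ 2 + 2 * (Fintype.card V + K.card) := by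
  classical
  set n := Fintype.card V with hn
  set k := K.card with hk
  have hKn : k ≤ n := by rw [hk, hn]; exact Finset.card_le_univ K
  have h1n : 1 < n := by omega
  have hVne : Nonempty V := Fintype.card_pos_iff.mp (by omega)
  obtain ⟨⟨x, y⟩, hmax⟩ := Finite.exists_max (fun p : V × V => T.dist p.1 p.2)
  set d := T.dist x y with hdd
  have hd : ∀ u v, T.dist u v ≤ d := fun u v => hmax (u, v)
  obtain ⟨a, b, hab⟩ := Fintype.exists_pair_of_one_lt_card h1n
  have hd1 : 1 ≤ d := le_trans (hT.isConnected.pos_dist_of_ne hab) (hd a b)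
  have hxy : x ≠ y := by
    intro h
    rw [hdd, h, SimpleGraph.dist_self] at hd1
    omega
  obtain ⟨P, hP, hPlen⟩ := hT.isConnected.exists_path_of_dist x y
  set PS := P.support.toFinset with hPS
  have hmem : ∀ v, v ∈ PS ↔ v ∈ P.support := fun v => List.mem_toFinset
  have hPScard : PS.card = d + 1 := by
    rw [hPS, List.toFinset_card_of_nodup hP.support_nodup, Walk.length_support, hPlen]
  have hsplitP : ∀ v ∈ P.support, T.dist x v + T.dist v y = d := fun v hv =>
    tree_split hT P hP hv
  -- eccentricity bounds
  have hecc_all : ∀ v, ecc T v ≤ d := fun v => ecc_le (fun u => hd v u)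
  have hecc_path : ∀ v ∈ P.support, ecc T v ≤ max (T.dist x v) (d - T.dist x v) := by
    intro v hv
    apply ecc_le
    intro z
    obtain ⟨w, hwP, hw⟩ := tree_proj hT P hP z
    have hzv : T.dist z v = T.dist z w + T.dist w v := hw v hv
    have hzx : T.dist z x = T.dist z w + T.dist w x := hw x P.start_mem_support
    have hzy : T.dist z y = T.dist z w + T.dist w y := hw y P.end_mem_support
    have hwxy : T.dist x w + T.dist w y = d := hsplitP w hwP
    have hvxy : T.dist x v + T.dist v y = d := hsplitP v hv
    have hzx' : T.dist z x ≤ d := hd z x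
    have hzy' : T.dist z y ≤ d := hd z y
    have hcomm1 : T.dist w x = T.dist x w := SimpleGraph.dist_comm ..
    have hcomm2 : T.dist v z = T.dist z v := SimpleGraph.dist_comm ..
    have h2 := tree_dist2 hT P hP hwP hv
    have hcomm3 : T.dist v w = T.dist w v := SimpleGraph.dist_comm ..
    rcases h2 with h2 | h2
    · refine le_trans ?_ (le_max_left _ _)
      omega
    · refine le_trans ?_ (le_max_right _ _)
      omega
  -- injectivity of dist x on the path
  have hinj : ∀ v ∈ PS, ∀ w ∈ PS, T.dist x v = T.dist x w → v = w := by
    intro v hv w hw heq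
    rcases tree_dist2 hT P hP ((hmem v).mp hv) ((hmem w).mp hw) with h | h
    · have : T.dist v w = 0 := by omega
      exact (hT.isConnected.dist_eq_zero_iff).mp this
    · have : T.dist w v = 0 := by omega
      exact ((hT.isConnected.dist_eq_zero_iff).mp this).symm
  have himg : PS.image (fun v => T.dist x v) = Finset.range (d + 1) := by
    apply Finset.eq_of_subset_of_card_le
    · intro j hj
      rw [Finset.mem_image] at hj
      obtain ⟨v, hv, rfl⟩ := hj
      rw [Finset.mem_range]
      have := hd x v
      omega
    · rw [Finset.card_range, Finset.card_image_of_injOn hinj, hPScard]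
  have hsum_path : ∑ v ∈ PS, max (T.dist x v) (d - T.dist x v)
      = ∑ j ∈ Finset.range (d + 1), max j (d - j) := by
    rw [← himg, Finset.sum_image hinj]
  -- counting: pendant vertices are not interior path vertices
  have hdisj : ∀ v ∈ K, v ∉ (PS.erase x).erase y := by
    intro v hvK hvI
    rw [Finset.mem_erase, Finset.mem_erase] at hvI
    obtain ⟨hvy, hvx, hvPS⟩ := hvI
    obtain ⟨u0, hu0, huniq⟩ := hKpend v hvK
    have huniq' : ∀ w, T.Adj v w → w = u0 := fun w hw => huniq w hw
    have h1 : T.dist x u0 + 1 ≤ T.dist x v :=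
      pendant_dist huniq' (Ne.symm hvx) (hT.isConnected x v)
    have h2 : T.dist y u0 + 1 ≤ T.dist y v :=
      pendant_dist huniq' (Ne.symm hvy) (hT.isConnected y v)
    have h3 : d ≤ T.dist x u0 + T.dist u0 y := by
      rw [hdd]
      exact hT.isConnected.dist_triangle
    have h4 : T.dist x v + T.dist v y = d := hsplitP v ((hmem v).mp hvPS)
    have hc1 : T.dist v y = T.dist y v := SimpleGraph.dist_comm ..
    have hc2 : T.dist u0 y = T.dist y u0 := SimpleGraph.dist_comm ..
    omega
  have hcount : k + (d - 1) ≤ n := by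
    have hdisj2 : Disjoint K ((PS.erase x).erase y) := by
      rw [Finset.disjoint_left]
      exact fun v hv hv2 => hdisj v hv hv2
    have hxPS : x ∈ PS := (hmem x).mpr P.start_mem_support
    have hyPS : y ∈ PS.erase x :=
      Finset.mem_erase.mpr ⟨Ne.symm hxy, (hmem y).mpr P.end_mem_support⟩
    have hcard : ((PS.erase x).erase y).card = d - 1 := by
      rw [Finset.card_erase_of_mem hyPS, Finset.card_erase_of_mem hxPS, hPScard]
      omega
    calc k + (d - 1) = (K ∪ (PS.erase x).erase y).card := by
          rw [Finset.card_union_of_disjoint hdisj2, hcard, hk]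
      _ ≤ n := by rw [hn]; exact Finset.card_le_univ _
  -- summing up
  have hsum : totalEcc T = ∑ v ∈ PS, ecc T v + ∑ v ∈ PSᶜ, ecc T v :=
    (Finset.sum_add_sum_compl PS _).symm
  have hcompl : ∑ v ∈ PSᶜ, ecc T v ≤ (n - (d + 1)) * d := by
    have := Finset.sum_le_card_nsmul PSᶜ (ecc T) d (fun v _ => hecc_all v)
    rwa [Finset.card_compl, hPScard, smul_eq_mul, ← hn] at this
  have hpathsum : ∑ v ∈ PS, ecc T v ≤ ∑ j ∈ Finset.range (d + 1), max j (d - j) := by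
    rw [← hsum_path]
    exact Finset.sum_le_sum (fun v hv => hecc_path v ((hmem v).mp hv))
  have hF := fsum_eq d
  set S := ∑ j ∈ Finset.range (d + 1), max j (d - j) with hS
  have hdn : d + 1 ≤ n := by rw [← hPScard, hn]; exact Finset.card_le_univ _
  set m' := n - (d + 1) with hm'
  have hnm : n = d + 1 + m' := by omega
  have htot : totalEcc T ≤ S + m' * d := by omega
  have hkm : k ≤ m' + 2 := by omega
  have hmod : d % 2 ≤ 1 := by omega
  -- final polynomial inequality
  have hfin : 4 * (S + m' * d) + k ^ 2 + 2 * n * k ≤ 3 * n ^ 2 + 2 * (n + k) := by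
    zify at hF hkm hnm hd1 hK2 ⊢
    nlinarith [mul_nonneg (by omega : (0:ℤ) ≤ (m' : ℤ) + 2 - k)
      (by positivity : (0:ℤ) ≤ 2 * (d:ℤ) + 3 * m' + 2 + k), hF, hmod]
  omega

variable {l m d : ℕ}

lemma tlmd_adj_path (i j : Fin d) (h : i.val + 1 = j.val) :
    (Tlmd l m d).Adj (.inl i) (.inl j) := by
  rw [Tlmd, SimpleGraph.fromRel_adj]
  exact ⟨by simp [Fin.ext_iff]; omega, Or.inl h⟩

lemma tlmd_adj_left (i : Fin d) (a : Fin l) (h : i.val = 0) :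
    (Tlmd l m d).Adj (.inl i) (.inr (.inl a)) := by
  rw [Tlmd, SimpleGraph.fromRel_adj]
  exact ⟨by simp, Or.inl h⟩

lemma tlmd_adj_right (i : Fin d) (b : Fin m) (h : i.val + 1 = d) :
    (Tlmd l m d).Adj (.inl i) (.inr (.inr b)) := by
  rw [Tlmd, SimpleGraph.fromRel_adj]
  exact ⟨by simp, Or.inl h⟩

def tphi (l m d : ℕ) : Fin d ⊕ (Fin l ⊕ Fin m) → ℕ
  | .inl i => i.val + 1
  | .inr (.inl _) => 0
  | .inr (.inr _) => d + 1

lemma tlmd_phi_adj {p q : Fin d ⊕ (Fin l ⊕ Fin m)} (h : (Tlmd l m d).Adj p q) :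
    tphi l m d p ≤ tphi l m d q + 1 ∧ tphi l m d q ≤ tphi l m d p + 1 := by
  rw [Tlmd, SimpleGraph.fromRel_adj] at h
  obtain ⟨-, h | h⟩ := h <;>
    rcases p with i | a | b <;> rcases q with j | a' | b' <;>
      simp only [tphi] at * <;> omega

lemma tlmd_phi_walk {p q : Fin d ⊕ (Fin l ⊕ Fin m)} (w : (Tlmd l m d).Walk p q) :
    tphi l m d p ≤ tphi l m d q + w.length ∧ tphi l m d q ≤ tphi l m d p + w.length := by
  induction w with
  | nil => simp
  | cons h w ih =>
    have := tlmd_phi_adj h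
    rw [Walk.length_cons]
    omega

lemma tlmd_dist_ge {p q : Fin d ⊕ (Fin l ⊕ Fin m)} (w : (Tlmd l m d).Walk p q) (c : ℕ)
    (hc : tphi l m d q + c ≤ tphi l m d p ∨ tphi l m d p + c ≤ tphi l m d q) :
    c ≤ (Tlmd l m d).dist p q := by
  obtain ⟨w', hw'⟩ := (w.reachable).exists_walk_length_eq_dist
  have := tlmd_phi_walk w'
  omega

lemma tlmd_walk_path : ∀ (c i : ℕ) (hic : i + c < d),
    ∃ w : (Tlmd l m d).Walk (Sum.inl ⟨i, by omega⟩) (Sum.inl ⟨i + c, hic⟩), w.length = c := by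
  intro c
  induction c with
  | zero => exact fun i hic => ⟨Walk.nil, rfl⟩
  | succ c ih =>
    intro i hic
    obtain ⟨w, hw⟩ := ih i (by omega)
    refine ⟨w.concat (tlmd_adj_path _ _ rfl), ?_⟩
    rw [Walk.length_concat, hw]

lemma tlmd_walk_from_zero (i : Fin d) :
    ∃ w : (Tlmd l m d).Walk (Sum.inl ⟨0, i.pos⟩) (Sum.inl i), w.length = i.val := by
  obtain ⟨w, hw⟩ := tlmd_walk_path (l := l) (m := m) (d := d) i.val 0 (by have := i.isLt; omega)
  have he : (Sum.inl (⟨0 + i.val, by have := i.isLt; omega⟩ : Fin d) : Fin d ⊕ (Fin l ⊕ Fin m))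
      = Sum.inl i := by
    simp [Fin.ext_iff]
  refine ⟨w.copy rfl he, ?_⟩
  rw [Walk.length_copy, hw]

lemma tlmd_walk_to_last (i : Fin d) :
    ∃ w : (Tlmd l m d).Walk (Sum.inl i) (Sum.inl ⟨d - 1, Nat.sub_lt i.pos Nat.one_pos⟩),
      w.length = d - 1 - i.val := by
  obtain ⟨w, hw⟩ := tlmd_walk_path (l := l) (m := m) (d := d) (d - 1 - i.val) i.val
    (by have := i.isLt; omega)
  have he : (Sum.inl (⟨i.val + (d - 1 - i.val), by have := i.isLt; omega⟩ : Fin d) :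
      Fin d ⊕ (Fin l ⊕ Fin m)) = Sum.inl ⟨d - 1, Nat.sub_lt i.pos Nat.one_pos⟩ := by
    simp only [Sum.inl.injEq, Fin.ext_iff]
    have := i.isLt
    omega
  refine ⟨w.copy rfl he, ?_⟩
  rw [Walk.length_copy, hw]

lemma tlmd_dist_inl_inl (i j : Fin d) :
    (Tlmd l m d).dist (Sum.inl i) (Sum.inl j) ≤ max (j.val - i.val) (i.val - j.val) := by
  rcases le_total i.val j.val with h | h
  · obtain ⟨w, hw⟩ := tlmd_walk_path (l := l) (m := m) (d := d) (j.val - i.val) i.val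
      (by have := j.isLt; omega)
    have he : (Sum.inl (⟨i.val + (j.val - i.val), by omega⟩ : Fin d) : Fin d ⊕ (Fin l ⊕ Fin m))
        = Sum.inl j := by
      simp only [Sum.inl.injEq, Fin.ext_iff]
      have := j.isLt
      omega
    have hd' := SimpleGraph.dist_le (w.copy (congrArg Sum.inl (Fin.eta i i.isLt)) he)
    rw [Walk.length_copy, hw] at hd'
    exact le_trans hd' (le_max_left _ _)
  · obtain ⟨w, hw⟩ := tlmd_walk_path (l := l) (m := m) (d := d) (i.val - j.val) j.val
      (by have := i.isLt; omega)
    have he : (Sum.inl (⟨j.val + (i.val - j.val), by omega⟩ : Fin d) : Fin d ⊕ (Fin l ⊕ Fin m))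
        = Sum.inl i := by
      simp only [Sum.inl.injEq, Fin.ext_iff]
      have := i.isLt
      omega
    have hd' := SimpleGraph.dist_le ((w.copy (congrArg Sum.inl (Fin.eta j j.isLt)) he).reverse)
    rw [Walk.length_reverse, Walk.length_copy, hw] at hd'
    exact le_trans hd' (le_max_right _ _)

lemma tlmd_dist_left (i : Fin d) (a : Fin l) :
    (Tlmd l m d).dist (Sum.inl i) (Sum.inr (Sum.inl a)) = i.val + 1 := by
  obtain ⟨w, hw⟩ := tlmd_walk_from_zero (l := l) (m := m) i
  set w2 := Walk.cons ((tlmd_adj_left ⟨0, i.pos⟩ a rfl).symm) w with hw2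
  have hlen : w2.length = i.val + 1 := by rw [hw2, Walk.length_cons, hw]
  apply le_antisymm
  · have := SimpleGraph.dist_le w2.reverse
    rw [Walk.length_reverse, hlen] at this
    rw [SimpleGraph.dist_comm]
    have h2 := SimpleGraph.dist_le w2
    rwa [hlen] at h2
  · exact tlmd_dist_ge w2.reverse (i.val + 1) (by simp [tphi])

lemma tlmd_dist_right (i : Fin d) (b : Fin m) :
    (Tlmd l m d).dist (Sum.inl i) (Sum.inr (Sum.inr b)) = d - i.val := by
  obtain ⟨w, hw⟩ := tlmd_walk_to_last (l := l) (m := m) i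
  set w2 := w.concat (tlmd_adj_right ⟨d - 1, Nat.sub_lt i.pos Nat.one_pos⟩ b
    (by show d - 1 + 1 = d; have := i.pos; omega)) with hw2
  have hlen : w2.length = d - i.val := by
    rw [hw2, Walk.length_concat, hw]
    show d - 1 - i.val + 1 = d - i.val
    have := i.isLt
    omega
  apply le_antisymm
  · have := SimpleGraph.dist_le w2
    rwa [hlen] at this
  · refine tlmd_dist_ge w2 (d - i.val) ?_
    simp only [tphi]
    omega

lemma tlmd_dist_lr (a : Fin l) (b : Fin m) (hd0 : 0 < d) :
    (Tlmd l m d).dist (Sum.inr (Sum.inl a)) (Sum.inr (Sum.inr b)) = d + 1 := by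
  obtain ⟨w, hw⟩ := tlmd_walk_to_last (l := l) (m := m) ⟨0, hd0⟩
  have hw' : w.length = d - 1 := hw
  set w2 := Walk.cons ((tlmd_adj_left ⟨0, hd0⟩ a rfl).symm)
    (w.concat (tlmd_adj_right ⟨d - 1, Nat.sub_lt hd0 Nat.one_pos⟩ b
      (by show d - 1 + 1 = d; omega))) with hw2
  have hlen : w2.length = d + 1 := by
    rw [hw2, Walk.length_cons, Walk.length_concat, hw']
    omega
  apply le_antisymm
  · have := SimpleGraph.dist_le w2
    rwa [hlen] at this
  · refine tlmd_dist_ge w2 (d + 1) ?_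
    simp only [tphi]
    omega

lemma tlmd_dist_ll (a a' : Fin l) (hd0 : 0 < d) :
    (Tlmd l m d).dist (Sum.inr (Sum.inl a)) (Sum.inr (Sum.inl a')) ≤ 2 := by
  have := SimpleGraph.dist_le (Walk.cons ((tlmd_adj_left (m := m) ⟨0, hd0⟩ a rfl).symm)
    (Walk.cons (tlmd_adj_left ⟨0, hd0⟩ a' rfl) Walk.nil))
  simpa using this

lemma tlmd_dist_rr (b b' : Fin m) (hd0 : 0 < d) :
    (Tlmd l m d).dist (Sum.inr (Sum.inr b)) (Sum.inr (Sum.inr b')) ≤ 2 := by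
  have := SimpleGraph.dist_le (Walk.cons
    ((tlmd_adj_right (l := l) ⟨d - 1, Nat.sub_lt hd0 Nat.one_pos⟩ b
      (by show d - 1 + 1 = d; omega)).symm)
    (Walk.cons (tlmd_adj_right ⟨d - 1, Nat.sub_lt hd0 Nat.one_pos⟩ b'
      (by show d - 1 + 1 = d; omega)) Walk.nil))
  simpa using this

lemma tlmd_ecc_inl (hl : 0 < l) (hm : 0 < m) (i : Fin d) :
    ecc (Tlmd l m d) (Sum.inl i) = max (i.val + 1) (d - i.val) := by
  have hi := i.isLt
  apply le_antisymm
  · apply ecc_le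
    intro u
    rcases u with j | a | b
    · exact le_trans (tlmd_dist_inl_inl i j)
        (max_le (le_trans (by have := j.isLt; omega) (le_max_right _ _))
          (le_trans (by omega) (le_max_left _ _)))
    · rw [tlmd_dist_left]
      exact le_max_left _ _
    · rw [tlmd_dist_right]
      exact le_max_right _ _
  · rcases le_total (d - i.val) (i.val + 1) with h | h
    · rw [max_eq_left h]
      have := dist_le_ecc (G := Tlmd l m d) (Sum.inl i) (Sum.inr (Sum.inl ⟨0, hl⟩))
      rwa [tlmd_dist_left] at this
    · rw [max_eq_right h]
      have := dist_le_ecc (G := Tlmd l m d) (Sum.inl i) (Sum.inr (Sum.inr ⟨0, hm⟩))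
      rwa [tlmd_dist_right] at this

lemma tlmd_ecc_left (hm : 0 < m) (hd : 1 ≤ d) (a : Fin l) :
    ecc (Tlmd l m d) (Sum.inr (Sum.inl a)) = d + 1 := by
  apply le_antisymm
  · apply ecc_le
    intro u
    rcases u with j | a' | b
    · rw [SimpleGraph.dist_comm, tlmd_dist_left]
      have := j.isLt
      omega
    · exact le_trans (tlmd_dist_ll a a' (by omega)) (by omega)
    · rw [tlmd_dist_lr a b (by omega)]
  · have := dist_le_ecc (G := Tlmd l m d) (Sum.inr (Sum.inl a)) (Sum.inr (Sum.inr ⟨0, hm⟩))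
    rwa [tlmd_dist_lr a _ (by omega)] at this

lemma tlmd_ecc_right (hl : 0 < l) (hd : 1 ≤ d) (b : Fin m) :
    ecc (Tlmd l m d) (Sum.inr (Sum.inr b)) = d + 1 := by
  apply le_antisymm
  · apply ecc_le
    intro u
    rcases u with j | a | b'
    · rw [SimpleGraph.dist_comm, tlmd_dist_right]
      have := j.isLt
      omega
    · rw [SimpleGraph.dist_comm, tlmd_dist_lr a b (by omega)]
    · exact le_trans (tlmd_dist_rr b b' (by omega)) (by omega)
  · have := dist_le_ecc (G := Tlmd l m d) (Sum.inr (Sum.inr b)) (Sum.inr (Sum.inl ⟨0, hl⟩))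
    rw [SimpleGraph.dist_comm, tlmd_dist_lr _ b (by omega)] at this
    exact this

lemma gsum_eq : ∀ d : ℕ, 4 * (∑ i ∈ Finset.range d, max (i + 1) (d - i)) + 1
    = 3 * d ^ 2 + 2 * d + (d + 1) % 2 := by
  intro d
  induction d using Nat.twoStepInduction with
  | zero => simp
  | one => decide
  | more d ih _ =>
    have hstep : (∑ i ∈ Finset.range (d + 2), max (i + 1) (d + 2 - i))
        = (∑ i ∈ Finset.range d, max (i + 1) (d - i)) + (3 * d + 4) := by
      rw [Finset.sum_range_succ'] -- peel i = 0
      have hcongr : ∀ i ∈ Finset.range (d + 1), max (i + 1 + 1) (d + 2 - (i + 1)) = max (i + 1) (d - i) + 1 := by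
        intro i hi
        rw [Finset.mem_range] at hi
        have h1 : d + 2 - (i + 1) = (d - i) + 1 := by omega
        rw [h1, Nat.succ_max_succ]
      rw [Finset.sum_congr rfl hcongr, Finset.sum_add_distrib, Finset.sum_const, Finset.card_range,
        Finset.sum_range_succ]
      have h2 : max (d + 1) (d - d) = d + 1 := by omega
      have h3 : max (0 + 1) (d + 2 - 0) = d + 2 := by omega
      rw [h2, h3]
      ring
    rw [hstep]
    have hp : (d + 2 + 1) % 2 = (d + 1) % 2 := by omega
    rw [hp]
    nlinarith [ih]

lemma tlmd_totalEcc (hl : 0 < l) (hm : 0 < m) (hd3 : 3 ≤ d) :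
    4 * totalEcc (Tlmd l m d) + 1 = 3 * d ^ 2 + 2 * d + (d + 1) % 2 + 4 * ((l + m) * (d + 1)) := by
  have htot : totalEcc (Tlmd l m d)
      = (∑ i ∈ Finset.range d, max (i + 1) (d - i)) + (l + m) * (d + 1) := by
    rw [totalEcc, Fintype.sum_sum_type, Fintype.sum_sum_type]
    have h1 : ∀ i : Fin d, ecc (Tlmd l m d) (Sum.inl i) = max (i.val + 1) (d - i.val) :=
      tlmd_ecc_inl hl hm
    have h2 : ∀ a : Fin l, ecc (Tlmd l m d) (Sum.inr (Sum.inl a)) = d + 1 :=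
      tlmd_ecc_left hm (by omega)
    have h3 : ∀ b : Fin m, ecc (Tlmd l m d) (Sum.inr (Sum.inr b)) = d + 1 :=
      tlmd_ecc_right hl (by omega)
    rw [Finset.sum_congr rfl (fun i _ => h1 i), Finset.sum_congr rfl (fun a _ => h2 a),
      Finset.sum_congr rfl (fun b _ => h3 b), Finset.sum_const, Finset.sum_const]
    simp [Fin.sum_univ_eq_sum_range (fun i => max (i + 1) (d - i)) d]
    ring
  rw [htot]
  have := gsum_eq d
  omega

end Stmt8Aux

-- STATEMENT 8
theorem stmt8 {V : Type*} [Fintype V] (G : SimpleGraph V) (hG : G.Connected)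
    (n k : ℕ) (hcard : Fintype.card V = n) (hk2 : 2 ≤ k) (hk3 : k ≤ n - 3)
    (hpend : {v | IsPendant G v}.ncard = k) :
    totalEcc G ≤ (3 * n ^ 2 - k ^ 2 - 2 * n * k + 2 * (n + k)) / 4 ∧
    ∀ l, 1 ≤ l → l ≤ k - 1 →
      totalEcc (Tlmd l (k - l) (n - k)) = (3 * n ^ 2 - k ^ 2 - 2 * n * k + 2 * (n + k)) / 4 := by
  classical
  have hn5 : 2 + 3 ≤ n := by omega
  constructor
  · -- Part 1: the upper bound
    obtain ⟨T, hTle, hTtree⟩ := aux_exists_spanning_tree G hG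
    set K := {v | IsPendant G v}.toFinset with hK
    have hKcard : K.card = k := by
      rw [hK, ← Set.ncard_eq_toFinset_card']
      exact hpend
    have h1n : 1 < Fintype.card V := by rw [hcard]; omega
    have hKpend : ∀ v ∈ K, ∃! u, T.Adj v u := by
      intro v hv
      rw [hK, Set.mem_toFinset] at hv
      obtain ⟨u0, hu0, huniqG⟩ := hv
      obtain ⟨w, hwv⟩ := Fintype.exists_ne_of_one_lt_card h1n v
      obtain ⟨p⟩ := hTtree.isConnected v w
      obtain ⟨w1, hadj1, q, -⟩ := Walk.exists_eq_cons_of_ne (Ne.symm hwv) p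
      exact ⟨w1, hadj1, fun z hz => (huniqG z (hTle hz)).trans (huniqG w1 (hTle hadj1)).symm⟩
    have hbound := tree_totalEcc_bound hTtree K hKpend (by rw [hKcard]; exact hk2)
    rw [hKcard, hcard] at hbound
    have hmono : totalEcc G ≤ totalEcc T :=
      Finset.sum_le_sum fun v _ => ecc_mono hTle hTtree.isConnected v
    have hkn : k ≤ n := by omega
    have q1 : k ^ 2 ≤ n ^ 2 := Nat.pow_le_pow_left hkn 2
    have q2 : n * k ≤ n ^ 2 := by
      rw [pow_two]
      exact Nat.mul_le_mul_left n hkn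
    have h2nk : 2 * n * k = 2 * (n * k) := by ring
    rw [h2nk] at hbound ⊢
    omega
  · -- Part 2: the extremal trees
    intro l hl1 hlk
    have hd3 : 3 ≤ n - k := by omega
    have hm0 : 0 < k - l := by omega
    have ht := tlmd_totalEcc (l := l) (m := k - l) (d := n - k) (by omega) hm0 hd3
    have hlk' : l + (k - l) = k := by omega
    rw [hlk'] at ht
    set d := n - k with hd
    have e0 : n = d + k := by omega
    have e1 : 3 * n ^ 2 = 3 * d ^ 2 + 6 * (d * k) + 3 * k ^ 2 := by rw [e0]; ring
    have e2 : 2 * n * k = 2 * (d * k) + 2 * k ^ 2 := by rw [e0]; ring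
    have e3 : 4 * (k * (d + 1)) = 4 * (d * k) + 4 * k := by ring
    rw [e3] at ht
    omega
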